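/- Deletion–restriction for chambers: let 𝒜 be a hyperplane arrangement in ℝ^n with more than one hyperplane, H ∈ 𝒜, 𝒜' = 𝒜 \ {H}, and 𝒜'' the arrangement in H consisting of the intersections H ∩ K for K ∈ 𝒜'. Then the number of chambers of ℝ^n \ 𝒜 equals the number of chambers of ℝ^n \ 𝒜' plus the number of chambers of H \ 𝒜''. -/

import Mathlib

open Set

lemma card_components_eq_card_range {X I : Type*} [TopologicalSpace X] (s : X → I)
    (hop : ∀ i, IsOpen (s ⁻¹' {i})) (hpc : ∀ i, IsPreconnected (s ⁻¹' {i})) :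
    Nat.card (ConnectedComponents X) = Nat.card (Set.range s) := by
  have hlc : IsLocallyConstant s := IsLocallyConstant.iff_isOpen_fiber.2 hop
  have hconst : ∀ x y : X, connectedComponent x = connectedComponent y → s x = s y := by
    intro x y h
    exact hlc.apply_eq_of_isPreconnected isPreconnected_connectedComponent
      (h ▸ mem_connectedComponent) mem_connectedComponent
  refine Nat.card_eq_of_bijective
    (Quotient.lift (fun x => (⟨s x, mem_range_self x⟩ : Set.range s))
      (fun x y h => Subtype.ext (hconst x y h)) : ConnectedComponents X → Set.range s)
    ⟨?_, ?_⟩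
  · rintro ⟨x⟩ ⟨y⟩ h
    have hxy : s x = s y := Subtype.ext_iff.1 h
    have : y ∈ connectedComponent x :=
      (hpc (s x)).subset_connectedComponent (by simp) (by simp [hxy])
    exact ConnectedComponents.coe_eq_coe.2 (connectedComponent_eq this)
  · rintro ⟨i, x, rfl⟩
    exact ⟨Quotient.mk _ x, rfl⟩

lemma sum_mul_self_pos {n : ℕ} {a : Fin n → ℝ} (ha : a ≠ 0) : 0 < ∑ i, a i * a i := by
  have h0 : ∀ i ∈ Finset.univ, 0 ≤ a i * a i := fun i _ => mul_self_nonneg _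
  rcases (Finset.sum_nonneg h0).lt_or_eq with h | h
  · exact h
  · exfalso; apply ha; funext i
    have := (Finset.sum_eq_zero_iff_of_nonneg h0).1 h.symm i (Finset.mem_univ i)
    exact mul_self_eq_zero.1 this

lemma exists_perturb {n : ℕ} {a : Fin n → ℝ} (ha : a ≠ 0) (c : ℝ) {U : Set (Fin n → ℝ)}
    (hU : IsOpen U) {z : Fin n → ℝ} (hz : z ∈ U) (hzc : ∑ i, a i * z i = c) :
    (∃ x ∈ U, 0 < ∑ i, a i * x i - c) ∧ (∃ y ∈ U, ∑ i, a i * y i - c < 0) := by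
  obtain ⟨ε, hε, hball⟩ := Metric.isOpen_iff.1 hU z hz
  set t : ℝ := ε / (2 * (‖a‖ + 1)) with ht
  have hna : (0:ℝ) < ‖a‖ + 1 := by positivity
  have htpos : 0 < t := by positivity
  have hdist : ∀ s : ℝ, |s| = t → z + s • a ∈ U := by
    intro s hs
    apply hball
    rw [Metric.mem_ball, dist_eq_norm, add_sub_cancel_left, norm_smul, Real.norm_eq_abs, hs]
    calc t * ‖a‖ ≤ t * (‖a‖ + 1) := by nlinarith [htpos, norm_nonneg a]
    _ = ε / 2 := by rw [ht, div_mul_eq_mul_div, mul_div_mul_right _ _ hna.ne']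
    _ < ε := by linarith
  have hsum : ∀ s : ℝ, ∑ i, a i * (z + s • a) i - c = s * ∑ i, a i * a i := by
    intro s
    have : ∀ i, a i * (z + s • a) i = a i * z i + s * (a i * a i) := by
      intro i; simp [Pi.add_apply, Pi.smul_apply, smul_eq_mul]; ring
    simp only [this, Finset.sum_add_distrib, ← Finset.mul_sum, hzc]
    ring
  have hS := sum_mul_self_pos ha
  constructor
  · refine ⟨z + t • a, hdist t (abs_of_pos htpos), ?_⟩
    rw [hsum t]; positivity
  · refine ⟨z + (-t) • a, hdist (-t) (by rw [abs_neg, abs_of_pos htpos]), ?_⟩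
    rw [hsum (-t)]; nlinarith

lemma exists_zero_on_segment {n : ℕ} (a : Fin n → ℝ) (c : ℝ) {x y : Fin n → ℝ}
    (hx : 0 < ∑ i, a i * x i - c) (hy : ∑ i, a i * y i - c < 0) :
    ∃ z ∈ segment ℝ x y, ∑ i, a i * z i = c := by
  set g : ℝ → ℝ := fun s => ∑ i, a i * (x + s • (y - x)) i - c with hg
  have hgc : Continuous g := by
    apply Continuous.sub _ continuous_const
    apply continuous_finset_sum
    intro i _
    simp only [Pi.add_apply, Pi.smul_apply, Pi.sub_apply, smul_eq_mul]
    fun_prop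
  have hg0 : 0 < g 0 := by simpa [hg] using hx
  have hg1 : g 1 < 0 := by simpa [hg] using hy
  have : (0:ℝ) ∈ Icc (g 1) (g 0) := ⟨hg1.le, hg0.le⟩
  obtain ⟨s, hs, hgs⟩ := intermediate_value_Icc' (by norm_num : (0:ℝ) ≤ 1)
    hgc.continuousOn this
  refine ⟨x + s • (y - x), ?_, ?_⟩
  · rw [segment_eq_image']; exact ⟨s, hs, rfl⟩
  · have := sub_eq_zero.1 hgs
    linarith [this]

open Classical in
theorem deletion_restriction_chambers
    (n : ℕ) (A : Finset (Set (Fin n → ℝ)))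
    (hhyp : ∀ H ∈ A, ∃ (a : Fin n → ℝ) (c : ℝ), a ≠ 0 ∧ H = {x | ∑ i, a i * x i = c})
    (hcard : 1 < A.card) (H : Set (Fin n → ℝ)) (hH : H ∈ A) :
    Nat.card (ConnectedComponents ↥{x : Fin n → ℝ | ∀ K ∈ A, x ∉ K})
      = Nat.card (ConnectedComponents ↥{x : Fin n → ℝ | ∀ K ∈ A.erase H, x ∉ K})
        + Nat.card (ConnectedComponents ↥{x : Fin n → ℝ | x ∈ H ∧ ∀ K ∈ A.erase H, x ∉ K}) := by
  classical
  choose! a c ha hKeq using hhyp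
  set E := A.erase H with hE
  have hEA : ∀ K ∈ E, K ∈ A := fun K hK => Finset.mem_of_mem_erase hK
  set f : Set (Fin n → ℝ) → (Fin n → ℝ) → ℝ := fun K x => (∑ i, a K i * x i) - c K with hf
  have hlin : ∀ K, IsLinearMap ℝ (fun x : Fin n → ℝ => ∑ i, a K i * x i) := by
    intro K
    constructor
    · intro x y; rw [← Finset.sum_add_distrib]; congr 1; funext i
      simp [Pi.add_apply]; ring
    · intro t x
      simp only [Pi.smul_apply, smul_eq_mul, Finset.mul_sum]
      exact Finset.sum_congr rfl fun i _ => by ring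
  have hcont : ∀ K, Continuous (f K) := by
    intro K
    apply Continuous.sub _ continuous_const
    exact continuous_finset_sum _ fun i _ => (continuous_const.mul (continuous_apply i))
  have hmem' : ∀ K ∈ A, ∀ x, (x ∈ K ↔ f K x = 0) := by
    intro K hK x
    have h1 : x ∈ K ↔ ∑ i, a K i * x i = c K := by
      conv_lhs => rw [hKeq K hK]
      exact Iff.rfl
    rw [h1, hf]; exact (sub_eq_zero).symm
  have hmem : ∀ K ∈ A, ∀ x, (x ∉ K ↔ f K x ≠ 0) := fun K hK x =>
    not_congr (hmem' K hK x)
  set sgn : (Fin n → ℝ) → Set (Fin n → ℝ) → Bool := fun x K => decide (0 < f K x) with hsgn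
  set u : Set (Fin n → ℝ) → Bool → Set (Fin n → ℝ) :=
    fun K b => if b then {x | 0 < f K x} else {x | f K x < 0} with hu
  have hut : ∀ K, u K true = {x | 0 < f K x} := fun K => if_pos rfl
  have huf : ∀ K, u K false = {x | f K x < 0} := fun K => if_neg (by simp)
  have hu_open : ∀ K b, IsOpen (u K b) := by
    intro K b; cases b
    · rw [huf]; exact isOpen_lt (hcont K) continuous_const
    · rw [hut]; exact isOpen_lt continuous_const (hcont K)
  have hu_convex : ∀ K b, Convex ℝ (u K b) := by
    intro K b; cases b
    · have h2 : u K false = {x | ∑ i, a K i * x i < c K} := by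
        rw [huf K]; ext x; simp [hf, sub_neg]
      rw [h2]; exact convex_halfSpace_lt (hlin K) (c K)
    · have h2 : u K true = {x | c K < ∑ i, a K i * x i} := by
        rw [hut K]; ext x; simp [hf, sub_pos]
      rw [h2]; exact convex_halfSpace_gt (hlin K) (c K)
  have hu_ne : ∀ K b x, x ∈ u K b → f K x ≠ 0 := by
    intro K b x hx; cases b
    · rw [huf K] at hx; exact ne_of_lt hx
    · rw [hut K] at hx; exact (ne_of_lt hx).symm
  have hu_sgn : ∀ K b x, f K x ≠ 0 → (x ∈ u K b ↔ sgn x K = b) := by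
    intro K b x hx; cases b
    · rw [huf K]
      simp only [hsgn, mem_setOf_eq, decide_eq_false_iff_not, not_lt]
      exact ⟨le_of_lt, fun h => lt_of_le_of_ne h hx⟩
    · rw [hut K]
      simp only [hsgn, mem_setOf_eq, decide_eq_true_eq]
  set U : (↥E → Bool) → Set (Fin n → ℝ) := fun σ => ⋂ K : ↥E, u K.1 (σ K) with hUdef
  have hU_open : ∀ σ, IsOpen (U σ) := fun σ =>
    isOpen_iInter_of_finite fun K => hu_open K.1 (σ K)
  have hU_convex : ∀ σ, Convex ℝ (U σ) := fun σ =>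
    convex_iInter fun K => hu_convex K.1 (σ K)
  have hU_avoid : ∀ σ x, x ∈ U σ → ∀ K ∈ E, x ∉ K := by
    intro σ x hx K hK
    have h1 : x ∈ u K (σ ⟨K, hK⟩) := mem_iInter.1 hx ⟨K, hK⟩
    exact (hmem K (hEA K hK) x).2 (hu_ne _ _ _ h1)
  have hU_mem : ∀ σ x, (∀ K ∈ E, x ∉ K) → (x ∈ U σ ↔ ∀ K : ↥E, sgn x K.1 = σ K) := by
    intro σ x hx
    rw [mem_iInter]
    exact forall_congr' fun K =>
      hu_sgn K.1 (σ K) x ((hmem K.1 (hEA K.1 K.2) x).1 (hx K.1 K.2))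
  set X : Set (Fin n → ℝ) := {x | ∀ K ∈ A, x ∉ K} with hX
  set X1 : Set (Fin n → ℝ) := {x | ∀ K ∈ E, x ∉ K} with hX1
  set X2 : Set (Fin n → ℝ) := {x | x ∈ H ∧ ∀ K ∈ E, x ∉ K} with hX2
  have hAsplit : ∀ x, (∀ K ∈ A, x ∉ K) ↔ (x ∉ H ∧ ∀ K ∈ E, x ∉ K) := by
    intro x
    constructor
    · intro h; exact ⟨h H hH, fun K hK => h K (hEA K hK)⟩
    · rintro ⟨h1, h2⟩ K hK
      by_cases hKH : K = H
      · subst hKH; exact h1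
      · exact h2 K (Finset.mem_erase.2 ⟨hKH, hK⟩)
  set sF : ↥X → (↥E → Bool) × Bool := fun x => (fun K => sgn x.1 K.1, sgn x.1 H) with hsF
  set s1 : ↥X1 → (↥E → Bool) := fun x K => sgn x.1 K.1 with hs1
  set s2 : ↥X2 → (↥E → Bool) := fun x K => sgn x.1 K.1 with hs2
  have hfib1 : ∀ σ, s1 ⁻¹' {σ} = Subtype.val ⁻¹' (U σ) := by
    intro σ
    ext x
    simp only [mem_preimage, mem_singleton_iff]
    rw [funext_iff]
    exact (hU_mem σ x.1 x.2).symm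
  have hfib2 : ∀ σ, s2 ⁻¹' {σ} = Subtype.val ⁻¹' (U σ) := by
    intro σ
    ext x
    simp only [mem_preimage, mem_singleton_iff]
    rw [funext_iff]
    exact (hU_mem σ x.1 x.2.2).symm
  have hfibF : ∀ p : (↥E → Bool) × Bool, sF ⁻¹' {p} = Subtype.val ⁻¹' (U p.1 ∩ u H p.2) := by
    rintro ⟨σ, b⟩
    ext x
    simp only [mem_preimage, mem_singleton_iff, mem_inter_iff]
    have hxH : f H x.1 ≠ 0 := (hmem H hH x.1).1 (x.2 H hH)
    have h1 := hU_mem σ x.1 (fun K hK => x.2 K (hEA K hK))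
    have h2 := hu_sgn H b x.1 hxH
    rw [Prod.ext_iff, funext_iff]
    exact and_congr h1.symm h2.symm
  have hUX1 : ∀ σ, U σ ⊆ X1 := fun σ x hx => hU_avoid σ x hx
  have hconvH : Convex ℝ H := by
    rw [hKeq H hH]; exact convex_hyperplane (hlin H) (c H)
  have hsubF : ∀ σ b, U σ ∩ u H b ⊆ X := by
    rintro σ b x ⟨hxU, hxu⟩
    refine (hAsplit x).2 ⟨?_, fun K hK => hU_avoid σ x hxU K hK⟩
    exact (hmem H hH x).2 (hu_ne H b x hxu)
  have himg1 : ∀ σ, Subtype.val '' (Subtype.val ⁻¹' (U σ) : Set ↥X1) = U σ := by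
    intro σ
    rw [Subtype.image_preimage_coe]
    exact inter_eq_self_of_subset_right (hUX1 σ)
  have himg2 : ∀ σ, Subtype.val '' (Subtype.val ⁻¹' (U σ) : Set ↥X2) = H ∩ U σ := by
    intro σ
    rw [Subtype.image_preimage_coe]
    ext x
    simp only [mem_inter_iff, hX2, mem_setOf_eq]
    exact ⟨fun ⟨h1, h2⟩ => ⟨h1.1, h2⟩, fun ⟨h1, h2⟩ => ⟨⟨h1, fun K hK => hU_avoid σ x h2 K hK⟩, h2⟩⟩
  have himgF : ∀ σ b, Subtype.val '' (Subtype.val ⁻¹' (U σ ∩ u H b) : Set ↥X) = U σ ∩ u H b := by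
    intro σ b
    rw [Subtype.image_preimage_coe]
    exact inter_eq_self_of_subset_right (hsubF σ b)
  have e1 : Nat.card (ConnectedComponents ↥X1) = Nat.card ↥(range s1) := by
    apply card_components_eq_card_range
    · intro σ; rw [hfib1]; exact (hU_open σ).preimage continuous_subtype_val
    · intro σ; rw [hfib1]
      apply (Topology.IsInducing.subtypeVal).isPreconnected_image.mp
      rw [himg1]
      exact (hU_convex σ).isPreconnected
  have e2 : Nat.card (ConnectedComponents ↥X2) = Nat.card ↥(range s2) := by
    apply card_components_eq_card_range
    · intro σ; rw [hfib2]; exact (hU_open σ).preimage continuous_subtype_val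
    · intro σ; rw [hfib2]
      apply (Topology.IsInducing.subtypeVal).isPreconnected_image.mp
      rw [himg2]
      exact (hconvH.inter (hU_convex σ)).isPreconnected
  have eF : Nat.card (ConnectedComponents ↥X) = Nat.card ↥(range sF) := by
    apply card_components_eq_card_range
    · rintro ⟨σ, b⟩; rw [hfibF]
      exact ((hU_open σ).inter (hu_open H b)).preimage continuous_subtype_val
    · rintro ⟨σ, b⟩; rw [hfibF]
      apply (Topology.IsInducing.subtypeVal).isPreconnected_image.mp
      rw [himgF]
      exact ((hU_convex σ).inter (hu_convex H b)).isPreconnected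
  rw [e1, e2, eF]
  -- realizability characterizations
  have hreal1 : ∀ σ, σ ∈ range s1 ↔ (U σ).Nonempty := by
    intro σ
    constructor
    · rintro ⟨x, rfl⟩
      have hx : x ∈ s1 ⁻¹' {s1 x} := rfl
      rw [hfib1] at hx
      exact ⟨x.1, hx⟩
    · rintro ⟨z, hz⟩
      refine ⟨⟨z, hUX1 σ hz⟩, ?_⟩
      have : (⟨z, hUX1 σ hz⟩ : ↥X1) ∈ s1 ⁻¹' {σ} := by rw [hfib1]; exact hz
      simpa using this
  have hreal2 : ∀ σ, σ ∈ range s2 ↔ (H ∩ U σ).Nonempty := by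
    intro σ
    constructor
    · rintro ⟨x, rfl⟩
      have hx : x ∈ s2 ⁻¹' {s2 x} := rfl
      rw [hfib2] at hx
      exact ⟨x.1, x.2.1, hx⟩
    · rintro ⟨z, hzH, hz⟩
      have hz2 : z ∈ X2 := ⟨hzH, fun K hK => hU_avoid σ z hz K hK⟩
      refine ⟨⟨z, hz2⟩, ?_⟩
      have : (⟨z, hz2⟩ : ↥X2) ∈ s2 ⁻¹' {σ} := by rw [hfib2]; exact hz
      simpa using this
  have hrealF : ∀ p : (↥E → Bool) × Bool, p ∈ range sF ↔ (U p.1 ∩ u H p.2).Nonempty := by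
    intro p
    constructor
    · rintro ⟨x, rfl⟩
      have hx : x ∈ sF ⁻¹' {sF x} := rfl
      rw [hfibF] at hx
      exact ⟨x.1, hx⟩
    · rintro ⟨z, hz⟩
      refine ⟨⟨z, hsubF p.1 p.2 hz⟩, ?_⟩
      have : (⟨z, hsubF p.1 p.2 hz⟩ : ↥X) ∈ sF ⁻¹' {p} := by rw [hfibF]; exact hz
      simpa using this
  -- geometric facts
  have G1 : ∀ σ, (H ∩ U σ).Nonempty → ∀ b, (σ, b) ∈ range sF := by
    rintro σ ⟨z, hzH, hzU⟩ b
    have hzc : ∑ i, a H i * z i = c H := sub_eq_zero.1 ((hmem' H hH z).1 hzH)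
    obtain ⟨⟨xp, hxpU, hxp⟩, xm, hxmU, hxm⟩ :=
      exists_perturb (ha H hH) (c H) (hU_open σ) hzU hzc
    cases b
    · exact (hrealF (σ, false)).2 ⟨xm, hxmU, by rw [huf H]; exact hxm⟩
    · exact (hrealF (σ, true)).2 ⟨xp, hxpU, by rw [hut H]; exact hxp⟩
  have G2 : ∀ σ b, (σ, b) ∈ range sF → σ ∈ range s1 := by
    intro σ b h
    obtain ⟨z, hzU, _⟩ := (hrealF (σ, b)).1 h
    exact (hreal1 σ).2 ⟨z, hzU⟩
  have G3 : ∀ σ, σ ∈ range s1 → ∃ b, (σ, b) ∈ range sF := by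
    intro σ hσ
    obtain ⟨z, hz⟩ := (hreal1 σ).1 hσ
    by_cases hz0 : f H z = 0
    · exact ⟨true, G1 σ ⟨z, (hmem' H hH z).2 hz0, hz⟩ true⟩
    · rcases lt_or_gt_of_ne hz0 with hlt | hgt
      · exact ⟨false, (hrealF (σ, false)).2 ⟨z, hz, by rw [huf H]; exact hlt⟩⟩
      · exact ⟨true, (hrealF (σ, true)).2 ⟨z, hz, by rw [hut H]; exact hgt⟩⟩
  have G5 : ∀ σ, (σ, true) ∈ range sF → (σ, false) ∈ range sF → σ ∈ range s2 := by
    intro σ h1 h2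
    obtain ⟨x, hxU, hxu⟩ := (hrealF (σ, true)).1 h1
    obtain ⟨y, hyU, hyu⟩ := (hrealF (σ, false)).1 h2
    rw [hut H] at hxu
    rw [huf H] at hyu
    have hx' : 0 < ∑ i, a H i * x i - c H := hxu
    have hy' : ∑ i, a H i * y i - c H < 0 := hyu
    obtain ⟨z, hzseg, hzc⟩ := exists_zero_on_segment (a H) (c H) hx' hy'
    have hzU : z ∈ U σ := (hU_convex σ).segment_subset hxU hyU hzseg
    have hzH : z ∈ H := (hmem' H hH z).2 (sub_eq_zero.2 hzc)
    exact (hreal2 σ).2 ⟨z, hzH, hzU⟩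
  -- counting
  have hR2R1 : range s2 ⊆ range s1 := by
    intro σ hσ
    obtain ⟨z, _, hzU⟩ := (hreal2 σ).1 hσ
    exact (hreal1 σ).2 ⟨z, hzU⟩
  set D : Set ((↥E → Bool) × Bool) := {p | p.1 ∈ range s2} with hD
  have hsplit : range sF ∩ D = (range s2) ×ˢ (univ : Set Bool) := by
    ext ⟨σ, b⟩
    simp only [mem_inter_iff, hD, mem_setOf_eq, mem_prod, mem_univ, and_true]
    exact ⟨fun h => h.2, fun h => ⟨G1 σ ((hreal2 σ).1 h) b, h⟩⟩
  have hdisj : Disjoint (range sF ∩ D) (range sF \ D) :=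
    Set.disjoint_left.2 fun p hp hq => hq.2 hp.2
  have c0 : (range sF).ncard = (range sF ∩ D).ncard + (range sF \ D).ncard := by
    conv_lhs => rw [← inter_union_diff (range sF) D]
    exact Set.ncard_union_eq hdisj (toFinite _) (toFinite _)
  have c1 : (range sF ∩ D).ncard = 2 * (range s2).ncard := by
    rw [hsplit]
    calc (range s2 ×ˢ (univ : Set Bool)).ncard
        = Nat.card ↥(range s2 ×ˢ (univ : Set Bool)) := (Nat.card_coe_set_eq _).symm
      _ = Nat.card (↥(range s2) × ↥(univ : Set Bool)) := Nat.card_congr (Equiv.Set.prod _ _)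
      _ = Nat.card ↥(range s2) * Nat.card ↥(univ : Set Bool) := Nat.card_prod _ _
      _ = 2 * (range s2).ncard := by
          rw [Nat.card_coe_set_eq, Nat.card_congr (Equiv.Set.univ Bool), Nat.card_eq_fintype_card,
            Fintype.card_bool, Nat.mul_comm]
  have c2 : (range sF \ D).ncard = ((range s1) \ (range s2)).ncard := by
    rw [← Nat.card_coe_set_eq, ← Nat.card_coe_set_eq]
    apply Nat.card_eq_of_bijective
      (fun p : ↥(range sF \ D) => (⟨p.1.1, G2 p.1.1 p.1.2 p.2.1, p.2.2⟩ : ↥(range s1 \ range s2)))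
    constructor
    · rintro ⟨⟨σ1, b1⟩, hp1, hp1'⟩ ⟨⟨σ2, b2⟩, hp2, hp2'⟩ h
      have hσ : σ1 = σ2 := Subtype.ext_iff.1 h
      subst hσ
      refine Subtype.ext ?_
      refine Prod.ext_iff.2 ⟨rfl, ?_⟩
      cases b1 <;> cases b2
      · rfl
      · exact absurd (G5 σ1 hp2 hp1) hp1'
      · exact absurd (G5 σ1 hp1 hp2) hp1'
      · rfl
    · rintro ⟨σ, hσ1, hσ2⟩
      obtain ⟨b, hb⟩ := G3 σ hσ1
      exact ⟨⟨(σ, b), hb, hσ2⟩, Subtype.ext rfl⟩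
  have c3 : (range s1).ncard = ((range s1) \ (range s2)).ncard + (range s2).ncard :=
    (Set.ncard_diff_add_ncard_of_subset hR2R1 (toFinite _)).symm
  rw [Nat.card_coe_set_eq, Nat.card_coe_set_eq, Nat.card_coe_set_eq, c0, c1, c2, c3]
  omega
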